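/- Let S be a planar star body with continuously differentiable radial function ρ(S,·), area A(S) = (1/2)∫_0^{2π} ρ² dθ and oriented area Ã(S) = (1/2)∫_0^{2π} (ρ')² dθ. For every integer k ≥ 2 and every μ ≤ −k, the reverse Chernoff inequality ∫_0^{π/k} ρ_k(S,θ) ρ_k(S,θ+π/k) dθ ≥ k·A(S) + μ·Ã(S) holds, where ρ_k(S,θ) = ∑_{m=0}^{k-1} ρ(S,θ+2mπ/k). -/

import Mathlib

open Real Finset
open Real MeasureTheory Complex intervalIntegral ContinuousMap AddCircle
open scoped ENNReal

section wirt

lemma parseval_cont {T : ℝ} [hT : Fact (0 < T)] (f : C(AddCircle T, ℂ)) :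
    Summable (fun n : ℤ => ‖fourierCoeff (⇑f) n‖ ^ 2) ∧
    ∑' n : ℤ, ‖fourierCoeff (⇑f) n‖ ^ 2
      = (1 / T) * ∫ x in (0:ℝ)..T, ‖f (x : AddCircle T)‖ ^ 2 := by
  set F := ContinuousMap.toLp (E := ℂ) 2 (@haarAddCircle T hT) ℂ f with hF
  have hcoeff : ∀ n, fourierCoeff (F : AddCircle T → ℂ) n = fourierCoeff (⇑f) n :=
    fourierCoeff_toLp f
  constructor
  · have h1 := (lp.memℓp (fourierBasis.repr F)).summable (p := 2) (by norm_num)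
    have : (fun n : ℤ => ‖fourierCoeff (⇑f) n‖ ^ 2)
        = fun n : ℤ => ‖fourierBasis.repr F n‖ ^ (2 : ℝ≥0∞).toReal := by
      funext n
      rw [fourierBasis_repr, hcoeff]
      norm_num
    rw [this]
    exact h1
  · have h2 := tsum_sq_fourierCoeff F
    simp_rw [hcoeff] at h2
    rw [h2]
    have h3 : ∫ t : AddCircle T, ‖F t‖ ^ 2 ∂haarAddCircle
        = ∫ t : AddCircle T, ‖f t‖ ^ 2 ∂haarAddCircle := by
      apply MeasureTheory.integral_congr_ae
      filter_upwards [ContinuousMap.coeFn_toLp (p := 2) (@haarAddCircle T hT) (𝕜 := ℂ) f]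
        with t ht
      rw [ht]
    rw [h3]
    have h4 : ∫ t : AddCircle T, ‖f t‖ ^ 2
        = T * ∫ t : AddCircle T, ‖f t‖ ^ 2 ∂haarAddCircle := by
      rw [volume_eq_smul_haarAddCircle, MeasureTheory.integral_smul_measure]
      simp [ENNReal.toReal_ofReal hT.out.le]
    have h5 : ∫ x in (0:ℝ)..T, ‖f (x : AddCircle T)‖ ^ 2
        = ∫ t : AddCircle T, ‖f t‖ ^ 2 := by
      simpa using AddCircle.intervalIntegral_preimage T 0 (fun t => ‖f t‖ ^ 2)
    rw [h5, h4, mul_comm T]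
    rw [one_div, inv_mul_eq_div, mul_div_assoc, div_self (ne_of_gt hT.out), mul_one]

lemma wirtinger {T : ℝ} (hT : 0 < T) (u u' : ℝ → ℝ)
    (hderiv : ∀ x, HasDerivAt u (u' x) x) (hu' : Continuous u')
    (hper : ∀ x, u (x + T) = u x) (hper' : ∀ x, u' (x + T) = u' x)
    (hmean : ∫ x in (0:ℝ)..T, u x = 0) :
    (2 * π / T) ^ 2 * ∫ x in (0:ℝ)..T, (u x) ^ 2 ≤ ∫ x in (0:ℝ)..T, (u' x) ^ 2 := by
  haveI : Fact (0 < T) := ⟨hT⟩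
  have hu : Continuous u := by
    have : Differentiable ℝ u := fun x => (hderiv x).differentiableAt
    exact this.continuous
  have hab : (0:ℝ) < 0 + T := by linarith
  set cu : ℝ → ℂ := fun x => (u x : ℂ) with hcu_def
  set cu' : ℝ → ℂ := fun x => (u' x : ℂ) with hcu'_def
  have hcu : Continuous cu := Complex.continuous_ofReal.comp hu
  have hcu' : Continuous cu' := Complex.continuous_ofReal.comp hu'
  have huT : u T = u 0 := by rw [← hper 0, zero_add]
  have hfc : Continuous (AddCircle.liftIco T 0 cu) :=
    AddCircle.liftIco_zero_continuous (by simp [hcu_def, huT]) hcu.continuousOn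
  have hgc : Continuous (AddCircle.liftIco T 0 cu') :=
    AddCircle.liftIco_zero_continuous (by
      simp only [hcu'_def]
      norm_cast
      rw [← hper' 0, zero_add]) hcu'.continuousOn
  set fC : C(AddCircle T, ℂ) := ⟨AddCircle.liftIco T 0 cu, hfc⟩ with hfC
  set gC : C(AddCircle T, ℂ) := ⟨AddCircle.liftIco T 0 cu', hgc⟩ with hgC
  -- evaluation on [0, T]
  have heval : ∀ (v : ℝ → ℂ) (hv : v T = v 0) (x : ℝ), x ∈ Set.uIcc (0:ℝ) T →
      AddCircle.liftIco T 0 v ↑x = v x := by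
    intro v hv x hx
    rw [Set.uIcc_of_le hT.le] at hx
    rcases eq_or_lt_of_le hx.2 with h | h
    · rw [h]
      have h2 : ((T : ℝ) : AddCircle T) = ((0:ℝ) : AddCircle T) := by
        have := AddCircle.coe_period (p := T)
        simp [this]
      rw [h2, AddCircle.liftIco_zero_coe_apply ⟨le_refl 0, hT⟩, hv]
    · exact AddCircle.liftIco_zero_coe_apply ⟨hx.1, h⟩
  have hIF : ∫ x in (0:ℝ)..T, ‖fC (x : AddCircle T)‖ ^ 2 = ∫ x in (0:ℝ)..T, (u x) ^ 2 := by
    apply intervalIntegral.integral_congr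
    intro x hx
    simp only [hfC, ContinuousMap.coe_mk]
    rw [heval cu (by simp [hcu_def, huT]) x hx]
    simp [hcu_def, Complex.norm_real, _root_.sq_abs]
  have hIG : ∫ x in (0:ℝ)..T, ‖gC (x : AddCircle T)‖ ^ 2 = ∫ x in (0:ℝ)..T, (u' x) ^ 2 := by
    apply intervalIntegral.integral_congr
    intro x hx
    simp only [hgC, ContinuousMap.coe_mk]
    rw [heval cu' (by simp only [hcu'_def]; norm_cast; rw [← hper' 0, zero_add]) x hx]
    simp [hcu'_def, Complex.norm_real, _root_.sq_abs]
  -- Fourier coefficients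
  have hcoef_f : ∀ n, fourierCoeff (⇑fC) n = fourierCoeffOn hab cu n := by
    intro n
    simp only [hfC, ContinuousMap.coe_mk]
    exact fourierCoeff_liftIco_eq cu n
  have hcoef_g : ∀ n, fourierCoeff (⇑gC) n = fourierCoeffOn hab cu' n := by
    intro n
    simp only [hgC, ContinuousMap.coe_mk]
    exact fourierCoeff_liftIco_eq cu' n
  -- coefficient of derivative relation
  have hrel : ∀ n : ℤ, n ≠ 0 → fourierCoeffOn hab cu n
      = (T : ℂ) / (2 * π * Complex.I * n) * fourierCoeffOn hab cu' n := by
    intro n hn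
    have := fourierCoeffOn_of_hasDerivAt hab hn
      (f := cu) (f' := cu') (fun x _ => (hderiv x).ofReal_comp)
      (hcu'.intervalIntegrable 0 (0 + T))
    rw [this]
    have h0 : cu (0 + T) - cu 0 = 0 := by
      simp only [hcu_def, zero_add]
      norm_cast
      rw [huT, sub_self]
    rw [h0, mul_zero, zero_sub]
    have hpi : (π : ℂ) ≠ 0 := by exact_mod_cast Real.pi_ne_zero
    have hnC : (n : ℂ) ≠ 0 := Int.cast_ne_zero.mpr hn
    field_simp
    push_cast; ring
  -- zero-th coefficient vanishes
  have hzero : fourierCoeffOn hab cu 0 = 0 := by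
    rw [fourierCoeffOn_eq_integral]
    simp only [neg_zero, fourier_zero, one_smul, zero_add, sub_zero]
    have : ∫ x in (0:ℝ)..T, cu x = ((∫ x in (0:ℝ)..T, u x : ℝ) : ℂ) := by
      simp [hcu_def, intervalIntegral.integral_ofReal]
    rw [this, hmean]
    simp
  -- pointwise comparison of coefficient norms
  have key : ∀ n : ℤ, (2 * π / T) ^ 2 * ‖fourierCoeff (⇑fC) n‖ ^ 2 ≤ ‖fourierCoeff (⇑gC) n‖ ^ 2 := by
    intro n
    rcases eq_or_ne n 0 with rfl | hn
    · rw [hcoef_f, hzero]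
      simp [sq_nonneg]
    · rw [hcoef_f, hcoef_g, hrel n hn, norm_mul, mul_pow]
      have hnorm : ‖(T : ℂ) / (2 * π * Complex.I * n)‖ = T / (2 * π * |(n:ℝ)|) := by
        rw [norm_div]
        simp only [Complex.norm_real, Real.norm_eq_abs, abs_of_pos hT]
        congr 1
        rw [norm_mul, norm_mul, norm_mul]
        simp [Real.pi_pos.le, abs_of_pos Real.pi_pos, Complex.norm_real]
      rw [hnorm]
      have hn1 : (1:ℝ) ≤ |(n:ℝ)| := by
        rw [← Int.cast_abs]
        exact_mod_cast Int.one_le_abs hn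
      have hd : (2 * π / T) ^ 2 * (T / (2 * π * |(n:ℝ)|)) ^ 2 = 1 / |(n:ℝ)| ^ 2 := by
        field_simp [_root_.sq_abs]
      calc (2 * π / T) ^ 2 * ((T / (2 * π * |(n:ℝ)|)) ^ 2 * ‖fourierCoeffOn hab cu' n‖ ^ 2)
          = (1 / |(n:ℝ)| ^ 2) * ‖fourierCoeffOn hab cu' n‖ ^ 2 := by rw [← mul_assoc, hd]
        _ ≤ 1 * ‖fourierCoeffOn hab cu' n‖ ^ 2 := by
            apply mul_le_mul_of_nonneg_right _ (sq_nonneg _)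
            rw [div_le_one (by positivity)]
            nlinarith
        _ = ‖fourierCoeffOn hab cu' n‖ ^ 2 := one_mul _
  -- Parseval
  obtain ⟨S1, P1⟩ := parseval_cont fC
  obtain ⟨S2, P2⟩ := parseval_cont gC
  rw [hIF] at P1
  rw [hIG] at P2
  have hsum : ∑' n : ℤ, (2 * π / T) ^ 2 * ‖fourierCoeff (⇑fC) n‖ ^ 2
      ≤ ∑' n : ℤ, ‖fourierCoeff (⇑gC) n‖ ^ 2 :=
    Summable.tsum_le_tsum key (S1.mul_left _) S2
  rw [tsum_mul_left, P1, P2] at hsum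
  have := mul_le_mul_of_nonneg_left hsum hT.le
  calc (2 * π / T) ^ 2 * ∫ x in (0:ℝ)..T, (u x) ^ 2
      = T * ((2 * π / T) ^ 2 * (1 / T * ∫ x in (0:ℝ)..T, (u x) ^ 2)) := by
        field_simp
    _ ≤ T * (1 / T * ∫ x in (0:ℝ)..T, (u' x) ^ 2) := this
    _ = ∫ x in (0:ℝ)..T, (u' x) ^ 2 := by field_simp


lemma periodic_deriv' {v v' : ℝ → ℝ} {c : ℝ} (hd : ∀ x, HasDerivAt v (v' x) x)
    (hv : ∀ x, v (x + c) = v x) : ∀ x, v' (x + c) = v' x := by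
  intro x
  have h1 : HasDerivAt (fun y => v (y + c)) (v' (x + c)) x :=
    (hd (x + c)).comp_add_const x c
  have heq : (fun y => v (y + c)) = v := funext hv
  rw [heq] at h1
  exact h1.unique (hd x)

lemma sum_translates_periodic {v : ℝ → ℝ} {k : ℕ} (hk : k ≠ 0)
    (hv : ∀ x, v (x + 2*π) = v x) (x : ℝ) :
    ∑ j ∈ Finset.range k, v (x + 2*π/k + (j:ℝ)*(2*π/k))
      = ∑ j ∈ Finset.range k, v (x + (j:ℝ)*(2*π/k)) := by
  have hkR : (k:ℝ) ≠ 0 := Nat.cast_ne_zero.mpr hk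
  have h1 : ∑ j ∈ Finset.range k, v (x + 2*π/k + (j:ℝ)*(2*π/k))
      = ∑ j ∈ Finset.range k, v (x + ((j+1 : ℕ):ℝ)*(2*π/k)) := by
    apply Finset.sum_congr rfl
    intro j _
    congr 1
    push_cast
    ring
  have h2 := Finset.sum_range_succ' (fun j : ℕ => v (x + (j:ℝ)*(2*π/k))) k
  have h3 := Finset.sum_range_succ (fun j : ℕ => v (x + (j:ℝ)*(2*π/k))) k
  have hk0 : v (x + ((0:ℕ):ℝ)*(2*π/k)) = v x := by norm_num
  have hkk : v (x + ((k:ℕ):ℝ)*(2*π/k)) = v x := by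
    have : x + ((k:ℕ):ℝ)*(2*π/k) = x + 2*π := by field_simp
    rw [this, hv]
  rw [h1]
  have h4 : ∑ j ∈ Finset.range k, v (x + ((j+1 : ℕ):ℝ)*(2*π/k))
      = ∑ x_1 ∈ Finset.range k, (fun j : ℕ => v (x + (j:ℝ)*(2*π/k))) (x_1 + 1) := rfl
  rw [h4]
  have := h2
  linarith [this, h3, hk0, hkk]


lemma sum_translates_integral {g : ℝ → ℝ} (hg : Continuous g) {k : ℕ} (hk : k ≠ 0) :
    ∫ x in (0:ℝ)..(2*π/k), (∑ j ∈ Finset.range k, g (x + (j:ℝ)*(2*π/k)))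
      = ∫ x in (0:ℝ)..(2*π), g x := by
  rw [intervalIntegral.integral_finset_sum
    (f := fun (j:ℕ) (x:ℝ) => g (x + (j:ℝ)*(2*π/(k:ℝ))))
    (fun j _ => (Continuous.intervalIntegrable (by fun_prop) _ _))]
  have h1 : ∀ j ∈ Finset.range k, (∫ x in (0:ℝ)..(2*π/k), g (x + (j:ℝ)*(2*π/k)))
      = ∫ x in ((j:ℝ)*(2*π/(k:ℝ)))..((((j+1:ℕ)):ℝ)*(2*π/(k:ℝ))), g x := by
    intro j _
    rw [intervalIntegral.integral_comp_add_right]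
    congr 1
    · ring
    · push_cast; ring
  rw [Finset.sum_congr rfl h1]
  have h2 := intervalIntegral.sum_integral_adjacent_intervals (μ := volume) (f := g)
    (a := fun j : ℕ => (j:ℝ)*(2*π/(k:ℝ))) (n := k) (fun i _ => hg.intervalIntegrable _ _)
  rw [h2]
  have hkR : (k:ℝ) ≠ 0 := Nat.cast_ne_zero.mpr hk
  congr 1
  · norm_num
  · field_simp

lemma periodic_integral_fold {v : ℝ → ℝ} (hv : Continuous v) {k : ℕ} (hk : k ≠ 0)
    (hper : ∀ x, v (x + 2*π/k) = v x) :
    ∫ x in (0:ℝ)..(2*π), v x = (k:ℝ) * ∫ x in (0:ℝ)..(2*π/k), v x := by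
  have hkR : (k:ℝ) ≠ 0 := Nat.cast_ne_zero.mpr hk
  have hper' : Function.Periodic v (2*π/k) := hper
  have h := hper'.intervalIntegral_add_zsmul_eq (k:ℤ) 0
    (fun t1 t2 => hv.intervalIntegrable t1 t2)
  simp only [zero_add, zsmul_eq_mul, Int.cast_natCast] at h
  have hb : (k:ℝ) * (2*π/k) = 2*π := by field_simp
  rw [hb] at h
  exact h

lemma translate_integral_2pi {w : ℝ → ℝ} (hw : Continuous w)
    (hper : ∀ x, w (x + 2*π) = w x) (c : ℝ) :
    ∫ x in (0:ℝ)..(2*π), w (x + c) = ∫ x in (0:ℝ)..(2*π), w x := by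
  rw [intervalIntegral.integral_comp_add_right]
  have hper' : Function.Periodic w (2*π) := hper
  have h := hper'.intervalIntegral_add_eq c 0
  have hb1 : (0:ℝ) + c = c := by ring
  have hb2 : 2*π + c = c + 2*π := by ring
  rw [hb1, hb2, h, zero_add]

lemma orth_lemma {g : ℝ → ℝ} (hg : Continuous g) {k : ℕ} (hk : k ≠ 0)
    (hgper : ∀ x, g (x + 2*π) = g x) :
    (k:ℝ) * ∫ x in (0:ℝ)..(2*π), (∑ j ∈ Finset.range k, g (x + (j:ℝ)*(2*π/k))) * g x
      = ∫ x in (0:ℝ)..(2*π), (∑ j ∈ Finset.range k, g (x + (j:ℝ)*(2*π/k)))^2 := by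
  have hkR : (k:ℝ) ≠ 0 := Nat.cast_ne_zero.mpr hk
  set P : ℝ → ℝ := fun x => ∑ j ∈ Finset.range k, g (x + (j:ℝ)*(2*π/(k:ℝ))) with hP
  have hPc : Continuous P :=
    continuous_finset_sum _ (fun j _ => hg.comp (continuous_id.add continuous_const))
  have hPper : ∀ x, P (x + 2*π/(k:ℝ)) = P x := fun x => sum_translates_periodic hk hgper x
  have hPperN : ∀ (j : ℕ) (x : ℝ), P (x + (j:ℝ)*(2*π/(k:ℝ))) = P x := by
    intro j
    induction j with
    | zero => intro x; norm_num
    | succ n ih =>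
        intro x
        have harg : x + ((n+1 : ℕ):ℝ)*(2*π/(k:ℝ)) = (x + 2*π/(k:ℝ)) + (n:ℝ)*(2*π/(k:ℝ)) := by
          push_cast; ring
        rw [harg, ih (x + 2*π/(k:ℝ)), hPper x]
  have hPper2 : ∀ x, P (x + 2*π) = P x := by
    intro x
    have : x + 2*π = x + (k:ℝ)*(2*π/(k:ℝ)) := by field_simp
    rw [this, hPperN k x]
  have hPGper : ∀ x, P (x + 2*π) * g (x + 2*π) = P x * g x := by
    intro x; rw [hgper, hPper2]
  have key : ∀ j ∈ Finset.range k,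
      (∫ x in (0:ℝ)..(2*π), P x * g (x + (j:ℝ)*(2*π/(k:ℝ))))
      = ∫ x in (0:ℝ)..(2*π), P x * g x := by
    intro j _
    have h1 : (∫ x in (0:ℝ)..(2*π), P x * g (x + (j:ℝ)*(2*π/(k:ℝ))))
        = ∫ x in (0:ℝ)..(2*π), (fun y => P y * g y) (x + (j:ℝ)*(2*π/(k:ℝ))) := by
      apply intervalIntegral.integral_congr
      intro x _
      simp only
      rw [hPperN j x]
    rw [h1]
    exact translate_integral_2pi (hPc.mul hg) hPGper _
  have expand : (∫ x in (0:ℝ)..(2*π), P x ^ 2)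
      = ∑ j ∈ Finset.range k, ∫ x in (0:ℝ)..(2*π), P x * g (x + (j:ℝ)*(2*π/(k:ℝ))) := by
    rw [← intervalIntegral.integral_finset_sum
      (f := fun (j:ℕ) (x:ℝ) => P x * g (x + (j:ℝ)*(2*π/(k:ℝ))))
      (fun j _ => (Continuous.intervalIntegrable (by fun_prop) _ _))]
    apply intervalIntegral.integral_congr
    intro x _
    simp only [← Finset.mul_sum]
    have : ∑ i ∈ Finset.range k, g (x + (i:ℝ) * (2 * π / (k:ℝ))) = P x := rfl
    rw [this, pow_two]
  rw [expand, Finset.sum_congr rfl key, Finset.sum_const, Finset.card_range, nsmul_eq_mul]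

end wirt

set_option maxHeartbeats 2000000 in
open intervalIntegral in
theorem reverse_chernoff (ρ ρ' : ℝ → ℝ)
    (hρ : Continuous ρ) (hpos : ∀ θ, 0 < ρ θ) (hper : ∀ θ, ρ (θ + 2 * π) = ρ θ)
    (hderiv : ∀ θ, HasDerivAt ρ (ρ' θ) θ) (hρ' : Continuous ρ')
    (k : ℕ) (hk : 2 ≤ k) (μ : ℝ) (hμ : μ ≤ -(k : ℝ)) :
    (∫ θ in (0:ℝ)..(π / k),
        (∑ m ∈ Finset.range k, ρ (θ + 2 * (m:ℝ) * π / k)) *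
        (∑ m ∈ Finset.range k, ρ (θ + π / k + 2 * (m:ℝ) * π / k)))
      ≥ (k : ℝ) * ((1 / 2) * ∫ θ in (0:ℝ)..(2 * π), (ρ θ) ^ 2) +
        μ * ((1 / 2) * ∫ θ in (0:ℝ)..(2 * π), (ρ' θ) ^ 2) := by
  have hπ : (0:ℝ) < π := Real.pi_pos
  have hkne : k ≠ 0 := by omega
  have hK2 : (2:ℝ) ≤ (k:ℝ) := by exact_mod_cast hk
  have hKpos : (0:ℝ) < (k:ℝ) := by linarith
  have hK0 : (k:ℝ) ≠ 0 := ne_of_gt hKpos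
  have hper' : ∀ x, ρ' (x + 2 * π) = ρ' x := periodic_deriv' hderiv hper
  set m₀ : ℝ := (∫ x in (0:ℝ)..(2*π), ρ x) / (2*π) with hm
  set g : ℝ → ℝ := fun x => ρ x - m₀ with hg
  have hgc : Continuous g := hρ.sub continuous_const
  have hgper : ∀ x, g (x + 2*π) = g x := by
    intro x; simp only [hg]; rw [show x + 2*π = x + 2 * π from rfl, hper]
  have hgd : ∀ x, HasDerivAt g (ρ' x) x := fun x => (hderiv x).sub_const m₀
  have hgmean : ∫ x in (0:ℝ)..(2*π), g x = 0 := by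
    simp only [hg]
    rw [intervalIntegral.integral_sub (hρ.intervalIntegrable _ _)
      (intervalIntegrable_const)]
    rw [intervalIntegral.integral_const, smul_eq_mul, hm]
    field_simp
    ring
  -- the translated sums
  set P : ℝ → ℝ := fun x => ∑ j ∈ Finset.range k, g (x + (j:ℝ)*(2*π/(k:ℝ))) with hP
  set P' : ℝ → ℝ := fun x => ∑ j ∈ Finset.range k, ρ' (x + (j:ℝ)*(2*π/(k:ℝ))) with hP'
  have hPc : Continuous P :=
    continuous_finset_sum _ (fun j _ => hgc.comp (continuous_id.add continuous_const))
  have hP'c : Continuous P' :=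
    continuous_finset_sum _ (fun j _ => hρ'.comp (continuous_id.add continuous_const))
  have hPd : ∀ x, HasDerivAt P (P' x) x := by
    intro x
    exact HasDerivAt.fun_sum (fun j _ => (hgd (x + (j:ℝ)*(2*π/(k:ℝ)))).comp_add_const x _)
  have hPper : ∀ x, P (x + 2*π/(k:ℝ)) = P x := fun x => sum_translates_periodic hkne hgper x
  have hP'per : ∀ x, P' (x + 2*π/(k:ℝ)) = P' x := fun x => sum_translates_periodic hkne hper' x
  have hPper2 : ∀ x, P (x + 2*π) = P x := by
    intro x
    simp only [hP]
    refine Finset.sum_congr rfl fun j _ => ?_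
    rw [show x + 2*π + (j:ℝ)*(2*π/(k:ℝ)) = (x + (j:ℝ)*(2*π/(k:ℝ))) + 2*π by ring, hgper]
  have hP'per2 : ∀ x, P' (x + 2*π) = P' x := by
    intro x
    simp only [hP']
    refine Finset.sum_congr rfl fun j _ => ?_
    rw [show x + 2*π + (j:ℝ)*(2*π/(k:ℝ)) = (x + (j:ℝ)*(2*π/(k:ℝ))) + 2*π by ring, hper']
  have hPmean : ∫ x in (0:ℝ)..(2*π/(k:ℝ)), P x = 0 :=
    (sum_translates_integral hgc hkne).trans hgmean
  -- key integral quantities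
  set B : ℝ := ∫ x in (0:ℝ)..(2*π/(k:ℝ)), P x ^ 2 with hBdef
  set B' : ℝ := ∫ x in (0:ℝ)..(2*π/(k:ℝ)), P' x ^ 2 with hB'def
  set C : ℝ := ∫ x in (0:ℝ)..(2*π), g x ^ 2 with hCdef
  set C' : ℝ := ∫ x in (0:ℝ)..(2*π), ρ' x ^ 2 with hC'def
  have hτpos : (0:ℝ) < 2*π/(k:ℝ) := by positivity
  have hB0 : 0 ≤ B := intervalIntegral.integral_nonneg hτpos.le (fun x _ => sq_nonneg _)
  have hB'0 : 0 ≤ B' := intervalIntegral.integral_nonneg hτpos.le (fun x _ => sq_nonneg _)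
  have hC'0 : 0 ≤ C' := intervalIntegral.integral_nonneg (by positivity) (fun x _ => sq_nonneg _)
  -- Wirtinger for P
  have hWP : (k:ℝ)^2 * B ≤ B' := by
    have hco : 2*π/(2*π/(k:ℝ)) = (k:ℝ) := by field_simp
    have := wirtinger hτpos P P' hPd hP'c hPper hP'per hPmean
    rw [hco] at this
    exact this
  -- folding
  have hD : ∫ x in (0:ℝ)..(2*π), P x ^ 2 = (k:ℝ) * B := by
    refine periodic_integral_fold (by fun_prop) hkne ?_
    intro x; exact congrArg (· ^ 2) (hPper x)
  have hD' : ∫ x in (0:ℝ)..(2*π), P' x ^ 2 = (k:ℝ) * B' := by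
    refine periodic_integral_fold (by fun_prop) hkne ?_
    intro x; exact congrArg (· ^ 2) (hP'per x)
  -- orthogonality
  have hEE : ∫ x in (0:ℝ)..(2*π), P x * g x = B := by
    apply mul_left_cancel₀ hK0
    rw [← hD]; exact orth_lemma hgc hkne hgper
  have hEE' : ∫ x in (0:ℝ)..(2*π), P' x * ρ' x = B' := by
    apply mul_left_cancel₀ hK0
    rw [← hD']; exact orth_lemma hρ' hkne hper'
  -- q and Wirtinger for q
  set q : ℝ → ℝ := fun x => g x - (1/(k:ℝ)) * P x with hq
  set q' : ℝ → ℝ := fun x => ρ' x - (1/(k:ℝ)) * P' x with hq'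
  have hqc : Continuous q := hgc.sub (continuous_const.mul hPc)
  have hq'c : Continuous q' := hρ'.sub (continuous_const.mul hP'c)
  have hqd : ∀ x, HasDerivAt q (q' x) x := fun x => (hgd x).sub ((hPd x).const_mul _)
  have hqper : ∀ x, q (x + 2*π) = q x := by
    intro x; simp only [hq]; rw [hgper, hPper2]
  have hq'per : ∀ x, q' (x + 2*π) = q' x := by
    intro x; simp only [hq']; rw [hper', hP'per2]
  have hP2mean : ∫ x in (0:ℝ)..(2*π), P x = 0 := by
    rw [periodic_integral_fold hPc hkne hPper, hPmean, mul_zero]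
  have hqmean : ∫ x in (0:ℝ)..(2*π), q x = 0 := by
    simp only [hq]
    rw [intervalIntegral.integral_sub (g := fun x => 1/(k:ℝ) * P x) (hgc.intervalIntegrable _ _)
      ((continuous_const.mul hPc).intervalIntegrable _ _),
      intervalIntegral.integral_const_mul, hP2mean, hgmean]
    ring
  set Q : ℝ := ∫ x in (0:ℝ)..(2*π), q x ^ 2 with hQdef
  set Q' : ℝ := ∫ x in (0:ℝ)..(2*π), q' x ^ 2 with hQ'def
  have hWq : Q ≤ Q' := by
    have h2π : (0:ℝ) < 2*π := by positivity
    have := wirtinger h2π q q' hqd hq'c hqper hq'per hqmean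
    rw [div_self (ne_of_gt h2π)] at this
    simpa using this
  -- expansions of Q, Q'
  have hQC : Q = C - B/(k:ℝ) := by
    have h1 : IntervalIntegrable (fun x => g x^2) volume 0 (2*π) :=
      (hgc.pow 2).intervalIntegrable _ _
    have h2 : IntervalIntegrable (fun x => P x * g x) volume 0 (2*π) :=
      (hPc.mul hgc).intervalIntegrable _ _
    have h3 : IntervalIntegrable (fun x => P x ^ 2) volume 0 (2*π) :=
      (hPc.pow 2).intervalIntegrable _ _
    have key : Q = (∫ x in (0:ℝ)..(2*π), g x ^ 2)
        - (2/(k:ℝ)) * (∫ x in (0:ℝ)..(2*π), P x * g x)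
        + (1/(k:ℝ)^2) * (∫ x in (0:ℝ)..(2*π), P x ^ 2) := by
      rw [hQdef, ← intervalIntegral.integral_const_mul, ← intervalIntegral.integral_const_mul,
        ← intervalIntegral.integral_sub h1 (h2.const_mul _),
        ← intervalIntegral.integral_add ((h1.sub (h2.const_mul _))) (h3.const_mul _)]
      apply intervalIntegral.integral_congr
      intro x _
      simp only [hq]
      ring
    rw [key, hEE, hD, ← hCdef]
    field_simp
    ring
  have hQ'C : Q' = C' - B'/(k:ℝ) := by
    have h1 : IntervalIntegrable (fun x => ρ' x^2) volume 0 (2*π) :=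
      (hρ'.pow 2).intervalIntegrable _ _
    have h2 : IntervalIntegrable (fun x => P' x * ρ' x) volume 0 (2*π) :=
      (hP'c.mul hρ').intervalIntegrable _ _
    have h3 : IntervalIntegrable (fun x => P' x ^ 2) volume 0 (2*π) :=
      (hP'c.pow 2).intervalIntegrable _ _
    have key : Q' = (∫ x in (0:ℝ)..(2*π), ρ' x ^ 2)
        - (2/(k:ℝ)) * (∫ x in (0:ℝ)..(2*π), P' x * ρ' x)
        + (1/(k:ℝ)^2) * (∫ x in (0:ℝ)..(2*π), P' x ^ 2) := by
      rw [hQ'def, ← intervalIntegral.integral_const_mul, ← intervalIntegral.integral_const_mul,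
        ← intervalIntegral.integral_sub h1 (h2.const_mul _),
        ← intervalIntegral.integral_add ((h1.sub (h2.const_mul _))) (h3.const_mul _)]
      apply intervalIntegral.integral_congr
      intro x _
      simp only [hq']
      ring
    rw [key, hEE', hD', ← hC'def]
    field_simp
    ring
  -- C - C' bound
  have hdiv : C - B/(k:ℝ) ≤ C' - B'/(k:ℝ) := by rw [← hQC, ← hQ'C]; exact hWq
  have escale : ∀ X Y : ℝ, (k:ℝ)*(X - Y/(k:ℝ)) = (k:ℝ)*X - Y := by
    intro X Y; field_simp
  have hCC' : (k:ℝ)*C - B ≤ (k:ℝ)*C' - B' := by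
    calc (k:ℝ)*C - B = (k:ℝ)*(C - B/(k:ℝ)) := (escale C B).symm
      _ ≤ (k:ℝ)*(C' - B'/(k:ℝ)) := mul_le_mul_of_nonneg_left hdiv hKpos.le
      _ = (k:ℝ)*C' - B' := escale C' B'
  -- decomposition of the sums in the statement
  have hdecomp : ∀ θ : ℝ, (∑ j ∈ Finset.range k, ρ (θ + 2 * (j:ℝ) * π / (k:ℝ)))
      = (k:ℝ)*m₀ + P θ := by
    intro θ
    have h1 : ∀ j ∈ Finset.range k, ρ (θ + 2 * (j:ℝ) * π / (k:ℝ))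
        = g (θ + (j:ℝ)*(2*π/(k:ℝ))) + m₀ := by
      intro j _
      simp only [hg]
      rw [show θ + 2 * (j:ℝ) * π / (k:ℝ) = θ + (j:ℝ)*(2*π/(k:ℝ)) by ring]
      ring
    rw [Finset.sum_congr rfl h1, Finset.sum_add_distrib, Finset.sum_const,
      Finset.card_range, nsmul_eq_mul]
    simp only [hP]
    ring
  set A : ℝ := ∫ θ in (0:ℝ)..(π/(k:ℝ)), P θ * P (θ + π/(k:ℝ)) with hAdef
  -- LHS equals k π m₀² + A
  have hLHS : (∫ θ in (0:ℝ)..(π / (k:ℝ)),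
        (∑ j ∈ Finset.range k, ρ (θ + 2 * (j:ℝ) * π / (k:ℝ))) *
        (∑ j ∈ Finset.range k, ρ (θ + π / (k:ℝ) + 2 * (j:ℝ) * π / (k:ℝ))))
      = (k:ℝ)*π*m₀^2 + A := by
    have e1 : (∫ θ in (0:ℝ)..(π / (k:ℝ)),
        (∑ j ∈ Finset.range k, ρ (θ + 2 * (j:ℝ) * π / (k:ℝ))) *
        (∑ j ∈ Finset.range k, ρ (θ + π / (k:ℝ) + 2 * (j:ℝ) * π / (k:ℝ))))
        = ∫ θ in (0:ℝ)..(π/(k:ℝ)), (((k:ℝ)*m₀)^2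
            + ((k:ℝ)*m₀*P (θ + π/(k:ℝ)) + ((k:ℝ)*m₀*P θ + P θ * P (θ + π/(k:ℝ))))) := by
      apply intervalIntegral.integral_congr
      intro θ _
      simp only [hdecomp]
      ring
    have i2 : IntervalIntegrable (fun θ => (k:ℝ)*m₀*P (θ + π/(k:ℝ))) volume 0 (π/(k:ℝ)) :=
      Continuous.intervalIntegrable (by fun_prop) _ _
    have i3 : IntervalIntegrable (fun θ => (k:ℝ)*m₀*P θ) volume 0 (π/(k:ℝ)) :=
      Continuous.intervalIntegrable (by fun_prop) _ _
    have i4 : IntervalIntegrable (fun θ => P θ * P (θ + π/(k:ℝ))) volume 0 (π/(k:ℝ)) :=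
      Continuous.intervalIntegrable (by fun_prop) _ _
    rw [e1, intervalIntegral.integral_add intervalIntegrable_const (i2.add (i3.add i4)),
      intervalIntegral.integral_add i2 (i3.add i4),
      intervalIntegral.integral_add i3 i4,
      intervalIntegral.integral_const, intervalIntegral.integral_const_mul,
      intervalIntegral.integral_const_mul]
    have hshift : (∫ θ in (0:ℝ)..(π/(k:ℝ)), P (θ + π/(k:ℝ)))
        + (∫ θ in (0:ℝ)..(π/(k:ℝ)), P θ) = 0 := by
      rw [intervalIntegral.integral_comp_add_right P (π/(k:ℝ)), zero_add, add_comm,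
        intervalIntegral.integral_add_adjacent_intervals (hPc.intervalIntegrable _ _)
          (hPc.intervalIntegrable _ _),
        show π/(k:ℝ) + π/(k:ℝ) = 2*π/(k:ℝ) by ring]
      exact hPmean
    have hconst : (π/(k:ℝ) - 0) • (((k:ℝ)*m₀)^2) = (k:ℝ)*π*m₀^2 := by
      rw [smul_eq_mul, sub_zero]
      field_simp
    rw [hconst, ← hAdef]
    linear_combination ((k:ℝ)*m₀) * hshift
  -- the bound A ≥ -(1/2) B
  have hsplitB : B = (∫ θ in (0:ℝ)..(π/(k:ℝ)), P θ^2)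
      + (∫ θ in (0:ℝ)..(π/(k:ℝ)), P (θ + π/(k:ℝ))^2) := by
    rw [intervalIntegral.integral_comp_add_right (fun θ => P θ^2) (π/(k:ℝ)), zero_add,
      intervalIntegral.integral_add_adjacent_intervals (f := fun x => P x ^ 2)
        ((hPc.pow 2).intervalIntegrable _ _) ((hPc.pow 2).intervalIntegrable _ _),
      show π/(k:ℝ) + π/(k:ℝ) = 2*π/(k:ℝ) by ring, hBdef]
  have hApos : 0 ≤ A + (1/2) * ((∫ θ in (0:ℝ)..(π/(k:ℝ)), P θ^2)
      + (∫ θ in (0:ℝ)..(π/(k:ℝ)), P (θ + π/(k:ℝ))^2)) := by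
    have i1 : IntervalIntegrable (fun θ => P θ * P (θ + π/(k:ℝ))) volume 0 (π/(k:ℝ)) :=
      Continuous.intervalIntegrable (by fun_prop) _ _
    have i2 : IntervalIntegrable (fun θ => (1/2) * P θ^2) volume 0 (π/(k:ℝ)) :=
      Continuous.intervalIntegrable (by fun_prop) _ _
    have i3 : IntervalIntegrable (fun θ => (1/2) * P (θ + π/(k:ℝ))^2) volume 0 (π/(k:ℝ)) :=
      Continuous.intervalIntegrable (by fun_prop) _ _
    have hnn : 0 ≤ ∫ θ in (0:ℝ)..(π/(k:ℝ)),
        (P θ * P (θ + π/(k:ℝ)) + ((1/2) * P θ^2 + (1/2) * P (θ + π/(k:ℝ))^2)) := by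
      apply intervalIntegral.integral_nonneg (by positivity)
      intro x _
      nlinarith [sq_nonneg (P x + P (x + π/(k:ℝ)))]
    rw [intervalIntegral.integral_add i1 (i2.add i3),
      intervalIntegral.integral_add i2 i3,
      intervalIntegral.integral_const_mul, intervalIntegral.integral_const_mul] at hnn
    rw [hAdef]
    linarith
  have hA : -(1/2) * B ≤ A := by
    rw [hsplitB]
    linarith
  -- expansion of ∫ ρ²
  have hρ2 : ∫ x in (0:ℝ)..(2*π), ρ x ^ 2 = 2*π*m₀^2 + C := by
    have h1 : IntervalIntegrable (fun x => g x^2) volume 0 (2*π) :=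
      (hgc.pow 2).intervalIntegrable _ _
    have h2 : IntervalIntegrable (fun x => 2*m₀*g x) volume 0 (2*π) :=
      Continuous.intervalIntegrable (by fun_prop) _ _
    have key : ∫ x in (0:ℝ)..(2*π), ρ x ^ 2
        = ∫ x in (0:ℝ)..(2*π), (g x^2 + (2*m₀*g x + m₀^2)) := by
      apply intervalIntegral.integral_congr
      intro x _
      simp only [hg]
      ring
    rw [key, intervalIntegral.integral_add h1 (h2.add intervalIntegrable_const),
      intervalIntegral.integral_add h2 intervalIntegrable_const,
      intervalIntegral.integral_const_mul, hgmean, intervalIntegral.integral_const,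
      smul_eq_mul, ← hCdef]
    ring
  -- final assembly
  rw [ge_iff_le]
  have hgoal2 : (k:ℝ) * ((1 / 2) * ∫ θ in (0:ℝ)..(2 * π), (ρ θ) ^ 2) + μ * ((1/2) * C')
      ≤ (k:ℝ)*π*m₀^2 + A := by
    have hμ' : μ * ((1/2) * C') ≤ -(k:ℝ) * ((1/2) * C') :=
      mul_le_mul_of_nonneg_right hμ (by positivity)
    have hstep : (1/2) * ((k:ℝ)*C - B) ≤ (1/2) * ((k:ℝ)*C' - B') := by linarith
    have hBB : (1/2) * (B - B') ≤ A := by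
      have hk22 : (0:ℝ) ≤ ((k:ℝ)^2 - 2) * B := by
        apply mul_nonneg _ hB0
        nlinarith
      linarith
    have hρ2' : ∫ θ in (0:ℝ)..(2 * π), (ρ θ) ^ 2 = 2*π*m₀^2 + C := hρ2
    rw [hρ2']
    nlinarith [hμ', hstep, hBB]
  calc (k:ℝ) * ((1 / 2) * ∫ θ in (0:ℝ)..(2 * π), (ρ θ) ^ 2) + μ * ((1/2) * C')
      ≤ (k:ℝ)*π*m₀^2 + A := hgoal2
    _ = (∫ θ in (0:ℝ)..(π / (k:ℝ)),
        (∑ j ∈ Finset.range k, ρ (θ + 2 * (j:ℝ) * π / (k:ℝ))) *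
        (∑ j ∈ Finset.range k, ρ (θ + π / (k:ℝ) + 2 * (j:ℝ) * π / (k:ℝ)))) := hLHS.symm
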